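/- Fix s ≥ 1, P_s = {a_1,…,a_s, c | a_i < c}, with μ the Möbius function of the generalized subword order P_s^*. For 1 ≤ m < n: μ(c^m, c^n) − μ(c^{m−1}, c^{n−1}) = s·μ(c^m, c^{n−1}). -/

import Mathlib

/-- The alphabet `P_s = {a_1, …, a_s, c}` with `a_i < c`: `some i` is `a_i`, `none` is `c`. -/
abbrev Letter (s : ℕ) := Option (Fin s)

/-- The generalized subword order on words over `P_s`. -/
def WLE {s : ℕ} (u w : List (Letter s)) : Prop :=
  ∃ w', w'.Sublist w ∧ List.Forall₂ (fun x y => x = y ∨ y = none) u w'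

namespace MuAux

/-- Is an optional letter a (present) `a`-letter? -/
def isA {s : ℕ} : Option (Letter s) → Bool
  | some (some _) => true
  | _ => false

/-- The candidate Möbius row values, defined by left recursion. `Fw s w (m+1)`
is the candidate for `μ(c^m, w)`; `Fw s w 0` is an auxiliary "row −1". -/
def Fw (s : ℕ) : List (Letter s) → ℕ → ℤ
  | [] => fun m => if m = 0 then -1 else if m = 1 then 1 else 0
  | x :: z => fun m =>
    match m with
    | 0 => 0
    | m + 1 =>
      match x with
      | some a => if z.head? = some (some a) then 0 else -Fw s z (m + 1)
      | none => Fw s z m + (s : ℤ) * Fw s z (m + 1) -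
          (if isA z.head? then Fw s z (m + 1) else 0)

@[simp] lemma Fw_nil (s m : ℕ) :
    Fw s [] m = if m = 0 then -1 else if m = 1 then 1 else 0 := rfl

@[simp] lemma Fw_cons_zero (s : ℕ) (x : Letter s) (z : List (Letter s)) :
    Fw s (x :: z) 0 = 0 := rfl

lemma Fw_cons_some (s m : ℕ) (a : Fin s) (z : List (Letter s)) :
    Fw s (some a :: z) (m + 1) =
      if z.head? = some (some a) then 0 else -Fw s z (m + 1) := rfl

lemma Fw_cons_none (s m : ℕ) (z : List (Letter s)) :
    Fw s (none :: z) (m + 1) =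
      Fw s z m + (s : ℤ) * Fw s z (m + 1) -
        (if isA z.head? then Fw s z (m + 1) else 0) := rfl

lemma Fw_zero (s : ℕ) (w : List (Letter s)) :
    Fw s w 0 = if w = [] then -1 else 0 := by
  cases w <;> simp

/-- Summing a candidate row over all first letters drops to the previous row. -/
lemma sum_letter (s : ℕ) (z : List (Letter s)) (m : ℕ) :
    ∑ x : Letter s, Fw s (x :: z) (m + 1) = Fw s z m := by
  rw [Fintype.sum_option, Fw_cons_none]
  have hc : ∀ a : Fin s, Fw s (some a :: z) (m + 1) =
      if z.head? = some (some a) then 0 else -Fw s z (m + 1) := fun a => rfl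
  simp only [hc]
  rcases h : z.head? with _ | y
  · simp [isA, Finset.sum_const, Finset.card_univ]
  · rcases y with _ | b
    · simp [isA, Finset.sum_const, Finset.card_univ]
    · have hsp : ∀ a : Fin s, (if (some (some b) : Option (Letter s)) = some (some a)
          then (0:ℤ) else -Fw s z (m + 1)) =
          -Fw s z (m + 1) + (if b = a then Fw s z (m + 1) else 0) := by
        intro a
        by_cases hab : b = a <;> simp [hab]
      rw [Finset.sum_congr rfl (fun a _ => hsp a)]
      rw [Finset.sum_add_distrib, Finset.sum_ite_eq Finset.univ b
        (fun _ => Fw s z (m + 1))]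
      simp [isA, Finset.sum_const, Finset.card_univ]

/-! ### Basic properties of `WLE` -/

variable {s : ℕ}

lemma WLE_nil (w : List (Letter s)) : WLE [] w :=
  ⟨[], List.nil_sublist w, List.Forall₂.nil⟩

lemma WLE_refl (w : List (Letter s)) : WLE w w :=
  ⟨w, List.Sublist.refl w, (List.forall₂_same).2 fun x _ => Or.inl rfl⟩

lemma WLE_length {u w : List (Letter s)} (h : WLE u w) : u.length ≤ w.length := by
  obtain ⟨w', hsub, hf⟩ := h
  calc u.length = w'.length := hf.length_eq
    _ ≤ w.length := hsub.length_le

lemma WLE_tail {y : Letter s} {t w : List (Letter s)} (h : WLE (y :: t) w) : WLE t w := by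
  obtain ⟨w', hsub, hf⟩ := h
  rcases List.forall₂_cons_left_iff.1 hf with ⟨b, w'', hb, hf', rfl⟩
  exact ⟨w'', ((List.sublist_cons_self b w'').trans hsub), hf'⟩

lemma WLE_cons_right {u w : List (Letter s)} (x : Letter s) (h : WLE u w) :
    WLE u (x :: w) := by
  obtain ⟨w', hsub, hf⟩ := h
  exact ⟨w', hsub.trans (List.sublist_cons_self x w), hf⟩

/-- Decomposition of the down-set of `c :: z`. -/
lemma WLE_cons_none_iff {u z : List (Letter s)} :
    WLE u ((none : Letter s) :: z) ↔ u = [] ∨ ∃ y t, u = y :: t ∧ WLE t z := by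
  constructor
  · rintro h
    rcases u with _ | ⟨y, t⟩
    · exact Or.inl rfl
    · refine Or.inr ⟨y, t, rfl, ?_⟩
      obtain ⟨w', hsub, hf⟩ := h
      rcases List.sublist_cons_iff.1 hsub with h1 | ⟨r, rfl, hsub'⟩
      · exact WLE_tail ⟨w', h1, hf⟩
      · obtain ⟨hy, hf'⟩ := List.forall₂_cons.1 hf
        exact ⟨r, hsub', hf'⟩
  · rintro (rfl | ⟨y, t, rfl, ht⟩)
    · exact WLE_nil _
    · obtain ⟨w', hsub, hf⟩ := ht
      exact ⟨none :: w', List.cons_sublist_cons.2 hsub, List.Forall₂.cons (Or.inr rfl) hf⟩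

/-- Decomposition of the down-set of `a :: z` for an `a`-letter. -/
lemma WLE_cons_some_iff {u z : List (Letter s)} {a : Fin s} :
    WLE u ((some a : Letter s) :: z) ↔ WLE u z ∨ ∃ t, u = some a :: t ∧ WLE t z := by
  constructor
  · rintro ⟨w', hsub, hf⟩
    rcases List.sublist_cons_iff.1 hsub with h1 | ⟨r, rfl, hsub'⟩
    · exact Or.inl ⟨w', h1, hf⟩
    · rcases u with _ | ⟨y, t⟩
      · exact Or.inl (WLE_nil _)
      · obtain ⟨hy, hf'⟩ := List.forall₂_cons.1 hf
        have hy' : y = some a := by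
          rcases hy with h | h
          · exact h
          · exact absurd h (by simp)
        exact Or.inr ⟨t, by rw [hy'], ⟨r, hsub', hf'⟩⟩
  · rintro (h | ⟨t, rfl, ht⟩)
    · exact WLE_cons_right _ h
    · obtain ⟨w', hsub, hf⟩ := ht
      exact ⟨some a :: w', List.cons_sublist_cons.2 hsub, List.Forall₂.cons (Or.inl rfl) hf⟩

lemma forall₂_count {u w : List (Letter s)}
    (h : List.Forall₂ (fun x y => x = y ∨ y = none) u w) :
    u.count (none : Letter s) ≤ w.count none ∧
      (u.count (none : Letter s) = w.count none → u = w) := by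
  induction h with
  | nil => exact ⟨le_refl _, fun _ => rfl⟩
  | @cons x y u' w' hxy hf ih =>
    rcases ih with ⟨hle, heq⟩
    rcases hxy with rfl | rfl
    · constructor
      · simp only [List.count_cons]; omega
      · intro hc
        have : u'.count (none : Letter s) = w'.count none := by
          simp only [List.count_cons] at hc; omega
        rw [heq this]
    · rcases x with _ | b
      · constructor
        · simp only [List.count_cons]; omega
        · intro hc
          have : u'.count (none : Letter s) = w'.count none := by
            simp only [List.count_cons] at hc; omega
          rw [heq this]
      · constructor
        · simp only [List.count_cons]; simp; omega
        · intro hc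
          exfalso
          simp only [List.count_cons] at hc
          simp at hc; omega

lemma WLE_replicate_iff {m : ℕ} {w : List (Letter s)} :
    WLE (List.replicate m (none : Letter s)) w ↔ m ≤ w.count none := by
  constructor
  · rintro ⟨w', hsub, hf⟩
    have h1 : (List.replicate m (none : Letter s)).count (none : Letter s)
        ≤ w'.count none := (forall₂_count hf).1
    have h2 : w'.count (none : Letter s) ≤ w.count none := hsub.count_le _
    simpa using le_trans h1 h2
  · intro hm
    exact ⟨List.replicate m none, List.replicate_sublist_iff.2 hm,
      (List.forall₂_same (l := List.replicate m (none : Letter s))).2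
        fun x _ => Or.inl rfl⟩

/-- The measure that decreases along strict order relations. -/
def meas (w : List (Letter s)) : ℕ := w.length * w.length + w.count none

lemma meas_lt {u w : List (Letter s)} (h : WLE u w) (hne : u ≠ w) :
    meas u < meas w := by
  obtain ⟨w', hsub, hf⟩ := h
  have hlen : u.length ≤ w.length := by
    calc u.length = w'.length := hf.length_eq
      _ ≤ w.length := hsub.length_le
  rcases lt_or_eq_of_le hlen with hlt | heq
  · have h1 : u.count (none : Letter s) ≤ u.length := List.count_le_length
    have h2 : u.length * u.length ≤ (w.length - 1) * (w.length - 1) :=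
      Nat.mul_le_mul (by omega) (by omega)
    have h3 : 1 ≤ w.length := by omega
    unfold meas
    nlinarith [(List.count_le_length (a := (none : Letter s)) (l := w))]
  · have hw' : w' = w := hsub.eq_of_length (by
      have := hf.length_eq; omega)
    rcases forall₂_count hf with ⟨hle, hcnt⟩
    rw [hw'] at hle hcnt
    have hneq : ¬ (u.count (none : Letter s) = w.count none) := fun hc => hne (hcnt hc)
    have hsq : u.length * u.length = w.length * w.length := by rw [heq]
    unfold meas
    omega

/-! ### Finite enumeration of down-sets -/

/-- All words of length at most `n`. -/
def enum (s : ℕ) : ℕ → Finset (List (Letter s))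
  | 0 => {[]}
  | n + 1 => insert []
      ((Finset.univ ×ˢ enum s n).image fun p : Letter s × List (Letter s) => p.1 :: p.2)

lemma mem_enum {n : ℕ} {t : List (Letter s)} : t ∈ enum s n ↔ t.length ≤ n := by
  induction n generalizing t with
  | zero =>
    simp [enum, List.length_eq_zero_iff]
  | succ n ih =>
    simp only [enum, Finset.mem_insert, Finset.mem_image, Finset.mem_product]
    constructor
    · rintro (rfl | ⟨⟨x, r⟩, ⟨-, hr⟩, rfl⟩)
      · simp
      · have h2 := ih.1 hr; simp only [List.length_cons]
        have h3 : (x, r).2 = r := rfl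
        rw [h3] at h2; omega
    · intro hlen
      rcases t with _ | ⟨x, r⟩
      · exact Or.inl rfl
      · refine Or.inr ⟨⟨x, r⟩, ⟨Finset.mem_univ _, ih.2 ?_⟩, rfl⟩
        show r.length ≤ n
        simp at hlen; omega

open Classical in
/-- The down-set of `w` as a finset. -/
noncomputable def Dfin (w : List (Letter s)) : Finset (List (Letter s)) :=
  (enum s w.length).filter (fun t => WLE t w)

lemma mem_Dfin {t w : List (Letter s)} : t ∈ Dfin w ↔ WLE t w := by
  classical
  simp only [Dfin, Finset.mem_filter, mem_enum]
  exact ⟨fun h => h.2, fun h => ⟨WLE_length h, h⟩⟩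

/-- Row sums of `Fw` over down-sets. -/
noncomputable def Hw (s : ℕ) (m : ℕ) (w : List (Letter s)) : ℤ :=
  ∑ t ∈ Dfin w, Fw s t m

lemma Hw_nil (m : ℕ) : Hw s m ([] : List (Letter s)) = Fw s [] m := by
  have : Dfin ([] : List (Letter s)) = {[]} := by
    ext t
    simp only [mem_Dfin, Finset.mem_singleton]
    constructor
    · intro h
      have := WLE_length h; simpa [List.length_eq_zero_iff] using this
    · rintro rfl; exact WLE_nil _
  rw [Hw, this, Finset.sum_singleton]

lemma Hw_zero (w : List (Letter s)) : Hw s 0 w = -1 := by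
  have h1 : ∀ t ∈ Dfin w, Fw s t 0 = if t = [] then -1 else 0 :=
    fun t _ => Fw_zero s t
  rw [Hw, Finset.sum_congr rfl h1, Finset.sum_ite_eq' (Dfin w) [] (fun _ => (-1 : ℤ))]
  simp [mem_Dfin, WLE_nil]

lemma Dfin_cons_none (z : List (Letter s)) :
    Dfin ((none : Letter s) :: z) = insert []
      ((Finset.univ ×ˢ Dfin z).image fun p : Letter s × List (Letter s) => p.1 :: p.2) := by
  ext t
  simp only [mem_Dfin, Finset.mem_insert, Finset.mem_image, Finset.mem_product,
    WLE_cons_none_iff]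
  constructor
  · rintro (rfl | ⟨y, r, rfl, hr⟩)
    · exact Or.inl rfl
    · exact Or.inr ⟨⟨y, r⟩, ⟨Finset.mem_univ _, hr⟩, rfl⟩
  · rintro (rfl | ⟨⟨y, r⟩, ⟨-, hr⟩, rfl⟩)
    · exact Or.inl rfl
    · exact Or.inr ⟨y, r, rfl, hr⟩

lemma Hw_cons_none (m : ℕ) (z : List (Letter s)) :
    Hw s (m + 1) ((none : Letter s) :: z) = Fw s [] (m + 1) + Hw s m z := by
  rw [Hw, Dfin_cons_none, Finset.sum_insert, Finset.sum_image]
  · congr 1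
    rw [Finset.sum_product]
    rw [Finset.sum_comm]
    have : ∀ t ∈ Dfin z, ∑ x : Letter s, Fw s (x :: t) (m + 1) = Fw s t m :=
      fun t _ => sum_letter s t m
    rw [Finset.sum_congr rfl this]
    rfl
  · rintro ⟨x, r⟩ - ⟨x', r'⟩ - h
    simpa [Prod.ext_iff] using h
  · simp

lemma Dfin_cons_some (a : Fin s) (z : List (Letter s)) :
    Dfin ((some a : Letter s) :: z) =
      Dfin z ∪ (Dfin z).image (List.cons (some a)) := by
  ext t
  simp only [mem_Dfin, Finset.mem_union, Finset.mem_image, WLE_cons_some_iff]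
  constructor
  · rintro (h | ⟨r, rfl, hr⟩)
    · exact Or.inl h
    · exact Or.inr ⟨r, hr, rfl⟩
  · rintro (h | ⟨r, hr, rfl⟩)
    · exact Or.inl h
    · exact Or.inr ⟨r, rfl, hr⟩

lemma Dfin_inter_image (a : Fin s) (z : List (Letter s)) :
    Dfin z ∩ (Dfin z).image (List.cons (some a)) =
      (Dfin z).filter (fun t => t.head? = some (some a)) := by
  classical
  ext t
  simp only [Finset.mem_inter, Finset.mem_image, Finset.mem_filter]
  constructor
  · rintro ⟨ht, r, hr, rfl⟩
    exact ⟨ht, rfl⟩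
  · rintro ⟨ht, hh⟩
    rcases t with _ | ⟨y, r⟩
    · simp at hh
    · simp only [List.head?_cons, Option.some_inj] at hh
      subst hh
      exact ⟨ht, r, mem_Dfin.2 (WLE_tail (mem_Dfin.1 ht)), rfl⟩

lemma Hw_cons_some (m : ℕ) (a : Fin s) (z : List (Letter s)) :
    Hw s (m + 1) ((some a : Letter s) :: z) = 0 := by
  classical
  have key := Finset.sum_union_inter (s₁ := Dfin z)
    (s₂ := (Dfin z).image (List.cons (some a))) (f := fun t => Fw s t (m + 1))
  rw [← Dfin_cons_some, Dfin_inter_image] at key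
  have himg : ∑ t ∈ (Dfin z).image (List.cons (some a)), Fw s t (m + 1)
      = ∑ t ∈ Dfin z, Fw s (some a :: t) (m + 1) := by
    rw [Finset.sum_image]
    intro x hx y hy h
    simpa using h
  have hval : ∀ t ∈ Dfin z, Fw s (some a :: t) (m + 1) =
      -Fw s t (m + 1) + (if t.head? = some (some a) then Fw s t (m + 1) else 0) := by
    intro t _
    rw [Fw_cons_some]
    by_cases h : t.head? = some (some a) <;> simp [h]
  have himg2 : ∑ t ∈ Dfin z, Fw s (some a :: t) (m + 1)
      = -Hw s (m + 1) z + ∑ t ∈ (Dfin z).filter (fun t => t.head? = some (some a)),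
          Fw s t (m + 1) := by
    rw [Finset.sum_congr rfl hval, Finset.sum_add_distrib, Finset.sum_neg_distrib]
    congr 1
    rw [Finset.sum_ite, Finset.sum_const, smul_zero, add_zero]
  rw [himg, himg2] at key
  have : Hw s (m + 1) ((some a : Letter s) :: z) =
      Hw s (m + 1) z + (-Hw s (m + 1) z +
        ∑ t ∈ (Dfin z).filter (fun t => t.head? = some (some a)), Fw s t (m + 1)) -
        ∑ t ∈ (Dfin z).filter (fun t => t.head? = some (some a)), Fw s t (m + 1) := by
    unfold Hw at key ⊢
    omega
  rw [this]; ring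

/-! ### Vanishing, normalization, and the main sum identity -/

lemma Fw_eq_zero_of_count : ∀ (w : List (Letter s)) (m : ℕ),
    w.count (none : Letter s) + 1 < m + 1 → Fw s w (m + 1) = 0 := by
  intro w
  induction w with
  | nil => intro m h; simp at h ⊢; omega
  | cons x z ih =>
    intro m h
    rcases x with _ | a
    · -- head is c
      rcases m with _ | m'
      · simp [List.count_cons] at h
      · rw [Fw_cons_none]
        have hz : z.count (none : Letter s) + 1 < m' + 1 := by
          simp [List.count_cons] at h; omega
        have h1 : Fw s z (m' + 1) = 0 := ih m' hz
        have h2 : Fw s z (m' + 1 + 1) = 0 := ih (m' + 1) (by omega)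
        rw [h1, h2]; simp
    · rw [Fw_cons_some]
      have hz : z.count (none : Letter s) + 1 < m + 1 := by
        simp [List.count_cons] at h; omega
      rw [ih m hz]
      simp

lemma head?_replicate_not_isA (k : ℕ) :
    isA (s := s) (List.replicate k (none : Letter s)).head? = false := by
  cases k <;> rfl

lemma Fw_replicate_self (m : ℕ) :
    Fw s (List.replicate m (none : Letter s)) (m + 1) = 1 := by
  induction m with
  | zero => simp
  | succ m ih =>
    rw [List.replicate_succ, Fw_cons_none, ih, head?_replicate_not_isA,
      Fw_eq_zero_of_count (List.replicate m none) (m + 1)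
        (by simp [List.count_replicate])]
    simp

/-- The master identity: row `m+1` sums to the indicator of `c^m`. -/
lemma Hw_main : ∀ (w : List (Letter s)) (m : ℕ),
    Hw s (m + 1) w = if w = List.replicate m (none : Letter s) then 1 else 0 := by
  intro w
  induction w with
  | nil =>
    intro m
    rw [Hw_nil]
    rcases m with _ | m' <;> simp [List.replicate]
  | cons x z ih =>
    intro m
    rcases x with _ | a
    · rw [Hw_cons_none]
      rcases m with _ | m'
      · rw [Hw_zero]
        simp [List.replicate]
      · rw [ih m']
        have hne : Fw s [] (m' + 1 + 1) = 0 := by simp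
        rw [hne, zero_add]
        by_cases hz : z = List.replicate m' (none : Letter s)
        · simp [hz, List.replicate_succ]
        · rw [if_neg hz, if_neg]
          simp only [List.replicate_succ, List.cons.injEq]
          intro h
          exact hz h.2
      -- done
    · rw [Hw_cons_some]
      rw [if_neg]
      rcases m with _ | m' <;> simp [List.replicate_succ]

/-- Uniqueness: any function satisfying the Möbius axioms agrees with `Fw`. -/
lemma mu_eq_Fw (μ : List (Letter s) → List (Letter s) → ℤ)
    (hrefl : ∀ u, μ u u = 1)
    (hnle : ∀ u v, ¬ WLE u v → μ u v = 0)
    (hsum : ∀ u v, WLE u v → u ≠ v →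
      ∑ᶠ z ∈ {z : List (Letter s) | WLE u z ∧ WLE z v}, μ u z = 0)
    (m : ℕ) : ∀ w : List (Letter s),
      μ (List.replicate m (none : Letter s)) w = Fw s w (m + 1) := by
  classical
  set cm := List.replicate m (none : Letter s) with hcm
  suffices h : ∀ N, ∀ w : List (Letter s), meas w < N → μ cm w = Fw s w (m + 1) by
    intro w; exact h (meas w + 1) w (by omega)
  intro N
  induction N with
  | zero => intro w h; omega
  | succ N ih =>
    intro w hwN
    by_cases hle : WLE cm w
    · by_cases heq : w = cm
      · rw [heq, hrefl, hcm, Fw_replicate_self]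
      · have h0 := hsum cm w hle (fun hh => heq hh.symm)
        have hSet : {z : List (Letter s) | WLE cm z ∧ WLE z w} =
            ↑((Dfin w).filter (fun z => WLE cm z)) := by
          ext z
          simp only [Set.mem_setOf_eq, Finset.coe_filter, mem_Dfin]
          tauto
        rw [hSet, finsum_mem_coe_finset] at h0
        set S := (Dfin w).filter (fun z => WLE cm z) with hS
        have hwS : w ∈ S := by
          rw [hS, Finset.mem_filter, mem_Dfin]
          exact ⟨WLE_refl w, hle⟩
        have hsplit : μ cm w + ∑ z ∈ S.erase w, μ cm z = ∑ z ∈ S, μ cm z :=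
          Finset.add_sum_erase S _ hwS
        have hIH : ∀ z ∈ S.erase w, μ cm z = Fw s z (m + 1) := by
          intro z hz
          have hzw : z ≠ w := (Finset.mem_erase.1 hz).1
          have hzS : z ∈ S := (Finset.mem_erase.1 hz).2
          have hzle : WLE z w := mem_Dfin.1 (Finset.mem_filter.1 hzS).1
          exact ih z (lt_of_lt_of_le (meas_lt hzle hzw) (by omega))
        have hSsum : ∑ z ∈ S, Fw s z (m + 1) = Hw s (m + 1) w := by
          rw [Hw]
          symm
          apply (Finset.sum_subset (Finset.filter_subset _ _) _).symm
          intro z hz hnz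
          have hnle' : ¬ WLE cm z := by
            simp only [Finset.mem_filter, hz, true_and] at hnz
            exact hnz
          have hcnt : z.count (none : Letter s) < m := by
            by_contra hc
            push_neg at hc
            exact hnle' (hcm ▸ WLE_replicate_iff.2 hc)
          exact Fw_eq_zero_of_count z m (by omega)
        have hH : Hw s (m + 1) w = 0 := by
          rw [Hw_main, if_neg heq]
        have hcongr : ∑ z ∈ S.erase w, μ cm z = ∑ z ∈ S.erase w, Fw s z (m + 1) :=
          Finset.sum_congr rfl hIH
        have h2 : Fw s w (m + 1) + ∑ z ∈ S.erase w, Fw s z (m + 1)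
            = ∑ z ∈ S, Fw s z (m + 1) :=
          Finset.add_sum_erase S (fun z => Fw s z (m + 1)) hwS
        rw [h0] at hsplit
        rw [hSsum, hH] at h2
        linarith [hsplit, h2, hcongr]
    · rw [hnle _ _ hle]
      have hcnt : w.count (none : Letter s) < m := by
        by_contra hc
        push_neg at hc
        exact hle (hcm ▸ WLE_replicate_iff.2 hc)
      exact (Fw_eq_zero_of_count w m (by omega)).symm

end MuAux

/-- For `1 ≤ m < n`: `μ(c^m, c^n) − μ(c^{m−1}, c^{n−1}) = s·μ(c^m, c^{n−1})`. -/
theorem mu_c_recurrence (s : ℕ) (hs : 1 ≤ s)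
    (μ : List (Letter s) → List (Letter s) → ℤ)
    (hrefl : ∀ u, μ u u = 1)
    (hnle : ∀ u v, ¬ WLE u v → μ u v = 0)
    (hsum : ∀ u v, WLE u v → u ≠ v → ∑ᶠ z ∈ {z : List (Letter s) | WLE u z ∧ WLE z v}, μ u z = 0)
    (m n : ℕ) (hm : 1 ≤ m) (hmn : m < n) :
    μ (List.replicate m (none : Letter s)) (List.replicate n (none : Letter s)) -
      μ (List.replicate (m - 1) (none : Letter s)) (List.replicate (n - 1) (none : Letter s))
      = (s : ℤ) * μ (List.replicate m (none : Letter s)) (List.replicate (n - 1) (none : Letter s)) := by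
  have key := MuAux.mu_eq_Fw (s := s) μ hrefl hnle hsum
  have hm1 : m - 1 + 1 = m := by omega
  have hn1 : n - 1 + 1 = n := by omega
  have hrep : List.replicate n (none : Letter s)
      = none :: List.replicate (n - 1) (none : Letter s) := by
    rw [← List.replicate_succ, hn1]
  have h1 := key m (List.replicate n (none : Letter s))
  have h2 := key (m - 1) (List.replicate (n - 1) (none : Letter s))
  have h3 := key m (List.replicate (n - 1) (none : Letter s))
  rw [hm1] at h2
  rw [h1, h2, h3, hrep, MuAux.Fw_cons_none, MuAux.head?_replicate_not_isA]
  have hm' : m - 1 + 1 = m := hm1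
  rw [← hm']
  simp
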